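/- Let m, n be positive integers, let r ≤ s ≤ min(m,n), let A be a complex m×n matrix of rank r with singular values σ_1 ≥ … ≥ σ_r > 0, and let B be a complex m×n matrix of rank s with singular values σ̂_1 ≥ … ≥ σ̂_s > 0. Then ‖A Bᴴ‖_F ≤ sqrt( (Σ_{j=1}^r σ_j² σ̂_j²) / ( Σ_{j=1}^r σ_j⁴ + Σ_{j=1}^s σ̂_j⁴ + 2 Σ_{j=1}^r σ_j² σ̂_j² ) ) · ‖ |A|² + |B|² ‖_F, where |A|² = AᴴA and |B|² = BᴴB. -/

import Mathlib

open scoped BigOperators Matrix ComplexOrder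

noncomputable def frob {m n : ℕ} (A : Matrix (Fin m) (Fin n) ℂ) : ℝ :=
  Real.sqrt (∑ i, ∑ j, ‖A i j‖ ^ 2)

noncomputable def absMat {m n : ℕ} (A : Matrix (Fin m) (Fin n) ℂ) :
    Matrix (Fin n) (Fin n) ℂ :=
  ((Matrix.posSemidef_conjTranspose_mul_self A).1.eigenvectorUnitary : Matrix (Fin n) (Fin n) ℂ) *
    Matrix.diagonal (((↑) : ℝ → ℂ) ∘ (√·) ∘ (Matrix.posSemidef_conjTranspose_mul_self A).1.eigenvalues) *
    (star (Matrix.posSemidef_conjTranspose_mul_self A).1.eigenvectorUnitary : Matrix (Fin n) (Fin n) ℂ)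

noncomputable def svdMat (m n r : ℕ) (σ : ℕ → ℝ) : Matrix (Fin m) (Fin n) ℂ :=
  Matrix.of fun i j =>
    if (i : ℕ) = (j : ℕ) ∧ (i : ℕ) < r then ((σ ((i : ℕ) + 1) : ℝ) : ℂ) else 0

/-- `A` admits a singular value decomposition with singular values
`σ 1, …, σ r` (indexed from 1) on the diagonal. -/
def HasSVD {m n : ℕ} (A : Matrix (Fin m) (Fin n) ℂ) (r : ℕ) (σ : ℕ → ℝ) : Prop :=
  ∃ (U : Matrix (Fin m) (Fin m) ℂ) (V : Matrix (Fin n) (Fin n) ℂ),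
    Uᴴ * U = 1 ∧ U * Uᴴ = 1 ∧ Vᴴ * V = 1 ∧ V * Vᴴ = 1 ∧
    A = U * svdMat m n r σ * Vᴴ

/-- `σ 1 ≥ σ 2 ≥ … ≥ σ r > 0`. -/
def SingVals (r : ℕ) (σ : ℕ → ℝ) : Prop :=
  (∀ j, 1 ≤ j → j ≤ r → 0 < σ j) ∧ ∀ j, 1 ≤ j → j < r → σ (j + 1) ≤ σ j

/-- Generalized polar decomposition: `A = Q * |A|`, where `Q` is a rank-`r` partial
isometry such that the column space of `Qᴴ` equals the column space of `|A|`. -/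
def IsPolar {m n : ℕ} (A Q : Matrix (Fin m) (Fin n) ℂ) (r : ℕ) : Prop :=
  A = Q * absMat A ∧ Q * Qᴴ * Q = Q ∧ Q.rank = r ∧
    LinearMap.range (Matrix.mulVecLin Qᴴ) =
      LinearMap.range (Matrix.mulVecLin (absMat A))

/-! ### Auxiliary lemmas -/

section Aux

open Finset Matrix

lemma count_le' (k n : ℕ) (hk : k < n) :
    ∑ j ∈ Finset.range n, (if j ≤ k then (1:ℝ) else 0) = (k : ℝ) + 1 := by
  rw [Finset.sum_boole]
  have : (Finset.range n).filter (fun j => j ≤ k) = Finset.range (k + 1) := by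
    ext j; simp [Finset.mem_filter]; omega
  rw [this]; simp

lemma count_min' (k l n : ℕ) (hk : k < n) :
    ∑ j ∈ Finset.range n, (if j ≤ k ∧ j ≤ l then (1:ℝ) else 0) = (min k l : ℝ) + 1 := by
  rw [Finset.sum_boole]
  have : (Finset.range n).filter (fun j => j ≤ k ∧ j ≤ l) = Finset.range (min k l + 1) := by
    ext j; simp [Finset.mem_filter]; omega
  rw [this]; simp

lemma abel_rep (n : ℕ) (a : ℕ → ℝ) (han : a n = 0) (i : ℕ) (hi : i < n) :
    a i = ∑ k ∈ Finset.range n, (if i ≤ k then a k - a (k+1) else 0) := by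
  rw [← Finset.sum_filter]
  have : (Finset.range n).filter (fun k => i ≤ k) = Finset.Ico i n := by
    ext k; simp [Finset.mem_filter]; omega
  rw [this, Finset.sum_Ico_eq_sub _ hi.le, Finset.sum_range_sub' a, Finset.sum_range_sub' a, han]
  ring

lemma key_ineq (n : ℕ) (a b : ℕ → ℝ) (w : ℕ → ℕ → ℝ)
    (ha : Antitone a) (hb : Antitone b)
    (han : a n = 0) (hbn : b n = 0)
    (hw0 : ∀ i j, 0 ≤ w i j)
    (hrow : ∀ i, i < n → ∑ j ∈ Finset.range n, w i j ≤ 1)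
    (hcol : ∀ j, j < n → ∑ i ∈ Finset.range n, w i j ≤ 1) :
    ∑ i ∈ Finset.range n, ∑ j ∈ Finset.range n, a i * b j * w i j ≤
      ∑ j ∈ Finset.range n, a j * b j := by
  set α : ℕ → ℝ := fun k => a k - a (k+1) with hα
  set β : ℕ → ℝ := fun k => b k - b (k+1) with hβ
  have hα0 : ∀ k, 0 ≤ α k := fun k => sub_nonneg.2 (ha (Nat.le_succ k))
  have hβ0 : ∀ k, 0 ≤ β k := fun k => sub_nonneg.2 (hb (Nat.le_succ k))
  set R : Finset (ℕ × ℕ) := Finset.range n ×ˢ Finset.range n with hR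
  have hab : ∀ i j : ℕ, i < n → j < n → a i * b j =
      ∑ q ∈ R, (if i ≤ q.1 ∧ j ≤ q.2 then α q.1 * β q.2 else 0) := by
    intro i j hi hj
    rw [abel_rep n a han i hi, abel_rep n b hbn j hj, Finset.sum_mul_sum]
    rw [hR, Finset.sum_product]
    refine Finset.sum_congr rfl fun k _ => Finset.sum_congr rfl fun l _ => ?_
    by_cases h1 : i ≤ k <;> by_cases h2 : j ≤ l <;> simp [h1, h2, hα, hβ]
  have hS : ∀ q : ℕ × ℕ, q ∈ R →
      ∑ p ∈ R, (if p.1 ≤ q.1 ∧ p.2 ≤ q.2 then w p.1 p.2 else 0)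
        ≤ (min q.1 q.2 : ℝ) + 1 := by
    rintro ⟨k, l⟩ hq
    rw [hR, Finset.mem_product, Finset.mem_range, Finset.mem_range] at hq
    rw [hR, Finset.sum_product]
    have bound1 : ∑ i ∈ Finset.range n, ∑ j ∈ Finset.range n,
        (if i ≤ k ∧ j ≤ l then w i j else 0) ≤ (k : ℝ) + 1 := by
      rw [← count_le' k n hq.1]
      refine Finset.sum_le_sum fun i _ => ?_
      by_cases hik : i ≤ k
      · simp only [hik, true_and, if_true]
        calc ∑ j ∈ Finset.range n, (if j ≤ l then w i j else 0)
            ≤ ∑ j ∈ Finset.range n, w i j :=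
              Finset.sum_le_sum fun j _ => by
                by_cases hjl : j ≤ l <;> simp [hjl, hw0]
          _ ≤ 1 := hrow i (by omega)
      · simp only [hik, false_and, if_false]
        exact le_of_eq (Finset.sum_eq_zero fun j _ => rfl)
    have bound2 : ∑ i ∈ Finset.range n, ∑ j ∈ Finset.range n,
        (if i ≤ k ∧ j ≤ l then w i j else 0) ≤ (l : ℝ) + 1 := by
      rw [Finset.sum_comm, ← count_le' l n hq.2]
      refine Finset.sum_le_sum fun j _ => ?_
      by_cases hjl : j ≤ l
      · simp only [hjl, and_true, if_true]
        calc ∑ i ∈ Finset.range n, (if i ≤ k then w i j else 0)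
            ≤ ∑ i ∈ Finset.range n, w i j :=
              Finset.sum_le_sum fun i _ => by
                by_cases hik : i ≤ k <;> simp [hik, hw0]
          _ ≤ 1 := hcol j (by omega)
      · simp only [hjl, and_false, if_false]
        exact le_of_eq (Finset.sum_eq_zero fun i _ => rfl)
    rcases Nat.le_total k l with h | h
    · rw [min_eq_left (show (k:ℝ) ≤ l by exact_mod_cast h)]; simpa using bound1
    · rw [min_eq_right (show (l:ℝ) ≤ k by exact_mod_cast h)]; simpa using bound2
  calc ∑ i ∈ Finset.range n, ∑ j ∈ Finset.range n, a i * b j * w i j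
      = ∑ p ∈ R, ∑ q ∈ R, ((if p.1 ≤ q.1 ∧ p.2 ≤ q.2 then α q.1 * β q.2 else 0) * w p.1 p.2) := by
        rw [hR, Finset.sum_product]
        refine Finset.sum_congr rfl fun i hi => Finset.sum_congr rfl fun j hj => ?_
        rw [Finset.mem_range] at hi hj
        rw [hab i j hi hj, Finset.sum_mul]
    _ = ∑ q ∈ R, (α q.1 * β q.2 *
          ∑ p ∈ R, (if p.1 ≤ q.1 ∧ p.2 ≤ q.2 then w p.1 p.2 else 0)) := by
        rw [Finset.sum_comm]
        refine Finset.sum_congr rfl fun q _ => ?_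
        rw [Finset.mul_sum]
        refine Finset.sum_congr rfl fun p _ => ?_
        by_cases h : p.1 ≤ q.1 ∧ p.2 ≤ q.2 <;> simp [h]
    _ ≤ ∑ q ∈ R, (α q.1 * β q.2 * ((min q.1 q.2 : ℝ) + 1)) := by
        refine Finset.sum_le_sum fun q hq => ?_
        exact mul_le_mul_of_nonneg_left (hS q hq) (mul_nonneg (hα0 _) (hβ0 _))
    _ = ∑ j ∈ Finset.range n, a j * b j := by
        symm
        calc ∑ j ∈ Finset.range n, a j * b j
            = ∑ j ∈ Finset.range n, ∑ q ∈ R,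
                (if j ≤ q.1 ∧ j ≤ q.2 then α q.1 * β q.2 else 0) := by
              refine Finset.sum_congr rfl fun j hj => ?_
              rw [Finset.mem_range] at hj
              exact hab j j hj hj
          _ = ∑ q ∈ R, ∑ j ∈ Finset.range n,
                (if j ≤ q.1 ∧ j ≤ q.2 then α q.1 * β q.2 else 0) := Finset.sum_comm
          _ = ∑ q ∈ R, (α q.1 * β q.2 * ((min q.1 q.2 : ℝ) + 1)) := by
              refine Finset.sum_congr rfl fun q hq => ?_
              rw [hR, Finset.mem_product, Finset.mem_range, Finset.mem_range] at hq
              rw [← count_min' q.1 q.2 n hq.1, Finset.mul_sum]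
              refine Finset.sum_congr rfl fun j _ => ?_
              by_cases h : j ≤ q.1 ∧ j ≤ q.2 <;> simp [h]

noncomputable def eF {m n : ℕ} (M : Matrix (Fin m) (Fin n) ℂ) : ℝ :=
  ∑ i, ∑ j, ‖M i j‖ ^ 2

lemma frob_eq_eF {m n : ℕ} (M : Matrix (Fin m) (Fin n) ℂ) :
    frob M = Real.sqrt (eF M) := rfl

lemma eF_eq_trace {m n : ℕ} (M : Matrix (Fin m) (Fin n) ℂ) :
    eF M = (Matrix.trace (Mᴴ * M)).re := by
  simp only [Matrix.trace, Matrix.diag, Matrix.mul_apply, Matrix.conjTranspose_apply, eF]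
  rw [Complex.re_sum]
  rw [show (∑ i : Fin m, ∑ j : Fin n, ‖M i j‖ ^ 2) = ∑ j : Fin n, ∑ i : Fin m, ‖M i j‖^2
    from Finset.sum_comm]
  refine Finset.sum_congr rfl fun j _ => ?_
  rw [Complex.re_sum]
  refine Finset.sum_congr rfl fun i _ => ?_
  rw [show star (M i j) = (starRingEnd ℂ) (M i j) from rfl, ← Complex.normSq_eq_conj_mul_self]
  rw [Complex.normSq_apply]
  rw [Complex.sq_norm, Complex.normSq_apply, Complex.ofReal_re]

lemma eF_nonneg {m n : ℕ} (M : Matrix (Fin m) (Fin n) ℂ) : 0 ≤ eF M :=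
  Finset.sum_nonneg fun i _ => Finset.sum_nonneg fun j _ => by positivity

lemma eF_unitary_left {m n : ℕ} (U : Matrix (Fin m) (Fin m) ℂ)
    (M : Matrix (Fin m) (Fin n) ℂ) (hU : Uᴴ * U = 1) : eF (U * M) = eF M := by
  rw [eF_eq_trace, eF_eq_trace, Matrix.conjTranspose_mul]
  rw [show Mᴴ * Uᴴ * (U * M) = Mᴴ * (Uᴴ * U) * M by
    rw [Matrix.mul_assoc, Matrix.mul_assoc, Matrix.mul_assoc], hU, Matrix.mul_one]

lemma eF_unitary_right {m n k : ℕ} (M : Matrix (Fin m) (Fin n) ℂ)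
    (V : Matrix (Fin n) (Fin k) ℂ) (hV : V * Vᴴ = 1) : eF (M * V) = eF M := by
  rw [eF_eq_trace, eF_eq_trace, Matrix.conjTranspose_mul]
  rw [show Vᴴ * Mᴴ * (M * V) = Vᴴ * (Mᴴ * M * V) by
    rw [Matrix.mul_assoc, Matrix.mul_assoc], Matrix.trace_mul_comm,
    Matrix.mul_assoc, hV, Matrix.mul_one]

lemma svd_mul_apply {m n p r : ℕ} (hrn : r ≤ n) (σ : ℕ → ℝ)
    (N : Matrix (Fin n) (Fin p) ℂ) (i : Fin m) (j : Fin p) :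
    (svdMat m n r σ * N) i j =
      if h : (i : ℕ) < r then ((σ ((i:ℕ)+1) : ℝ) : ℂ) * N ⟨i, h.trans_le hrn⟩ j else 0 := by
  rw [Matrix.mul_apply]
  by_cases h : (i : ℕ) < r
  · rw [dif_pos h]
    rw [Finset.sum_eq_single (⟨(i:ℕ), h.trans_le hrn⟩ : Fin n)]
    · simp [svdMat, h]
    · intro k _ hk
      have : ¬((i:ℕ) = (k:ℕ)) := fun he => hk (by ext; simp [← he])
      simp [svdMat, this]
    · simp
  · rw [dif_neg h]
    refine Finset.sum_eq_zero fun k _ => ?_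
    simp [svdMat, h]

lemma mul_svdH_apply {m n p s : ℕ} (hsn : s ≤ n) (σh : ℕ → ℝ)
    (N : Matrix (Fin p) (Fin n) ℂ) (i : Fin p) (j : Fin m) :
    (N * (svdMat m n s σh)ᴴ) i j =
      if h : (j : ℕ) < s then ((σh ((j:ℕ)+1) : ℝ) : ℂ) * N i ⟨j, h.trans_le hsn⟩ else 0 := by
  rw [Matrix.mul_apply]
  by_cases h : (j : ℕ) < s
  · rw [dif_pos h]
    rw [Finset.sum_eq_single (⟨(j:ℕ), h.trans_le hsn⟩ : Fin n)]
    · simp [svdMat, Matrix.conjTranspose_apply, h]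
      ring
    · intro k _ hk
      have : ¬((j:ℕ) = (k:ℕ)) := fun he => hk (by ext; simp [← he])
      simp [svdMat, Matrix.conjTranspose_apply, this]
    · simp
  · rw [dif_neg h]
    refine Finset.sum_eq_zero fun k _ => ?_
    simp [svdMat, Matrix.conjTranspose_apply, h]

lemma svdH_eq (m n r : ℕ) (σ : ℕ → ℝ) : (svdMat m n r σ)ᴴ = svdMat n m r σ := by
  ext i j
  rw [Matrix.conjTranspose_apply]
  show star (if (j:ℕ) = (i:ℕ) ∧ (j:ℕ) < r then ((σ ((j:ℕ)+1) : ℝ) : ℂ) else 0)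
      = if (i:ℕ) = (j:ℕ) ∧ (i:ℕ) < r then ((σ ((i:ℕ)+1) : ℝ) : ℂ) else 0
  by_cases h : (j : ℕ) = (i : ℕ)
  · by_cases h2 : (j:ℕ) < r
    · rw [if_pos ⟨h, h2⟩, if_pos ⟨h.symm, by omega⟩, h, Complex.star_def, Complex.conj_ofReal]
    · rw [if_neg (by rintro ⟨-, hh⟩; omega), if_neg (by rintro ⟨-, hh⟩; omega), star_zero]
  · rw [if_neg (by rintro ⟨hh, -⟩; omega), if_neg (by rintro ⟨hh, -⟩; omega), star_zero]

lemma range_ite_sum (n r : ℕ) (hrn : r ≤ n) (f : ℕ → ℝ) :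
    ∑ j ∈ Finset.range n, (if j < r then f (j+1) else 0) = ∑ j ∈ Finset.Icc 1 r, f j := by
  rw [← Finset.sum_filter]
  have h1 : (Finset.range n).filter (fun j => j < r) = Finset.range r := by
    ext j; simp [Finset.mem_filter]; omega
  rw [h1, ← Finset.Ico_add_one_right_eq_Icc, Finset.sum_Ico_eq_sum_range]
  simp [add_comm]

lemma sing_mono {r : ℕ} {σ : ℕ → ℝ} (h : SingVals r σ) :
    ∀ i j, 1 ≤ i → i ≤ j → j ≤ r → σ j ≤ σ i := by
  intro i j hi hij hjr
  induction j with
  | zero => omega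
  | succ k ih =>
    rcases Nat.eq_or_lt_of_le hij with he | hlt
    · rw [he]
    · exact (h.2 k (by omega) (by omega)).trans (ih (by omega) (by omega))

lemma eF_svd_gram (m n r : ℕ) (hrm : r ≤ m) (hrn : r ≤ n) (σ : ℕ → ℝ) :
    eF ((svdMat m n r σ)ᴴ * svdMat m n r σ) = ∑ j ∈ Finset.Icc 1 r, (σ j)^4 := by
  rw [svdH_eq]
  have hentry : ∀ k j : Fin n, (svdMat n m r σ * svdMat m n r σ) k j =
      if (k:ℕ) = (j:ℕ) ∧ (k:ℕ) < r then (((σ ((k:ℕ)+1))^2 : ℝ) : ℂ) else 0 := by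
    intro k j
    rw [svd_mul_apply hrm]
    by_cases h : (k:ℕ) < r
    · rw [dif_pos h]
      have hval : (svdMat m n r σ) ⟨(k:ℕ), h.trans_le hrm⟩ j
          = if (k:ℕ) = (j:ℕ) ∧ (k:ℕ) < r then ((σ ((k:ℕ)+1) : ℝ) : ℂ) else 0 := rfl
      rw [hval]
      by_cases h2 : (k:ℕ) = (j:ℕ)
      · rw [if_pos ⟨h2, h⟩, if_pos ⟨h2, h⟩]
        push_cast
        ring
      · rw [if_neg (by tauto), if_neg (by tauto), mul_zero]
    · rw [dif_neg h]
      rw [if_neg (by tauto)]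
  have step : eF (svdMat n m r σ * svdMat m n r σ)
      = ∑ k : Fin n, (if (k:ℕ) < r then (σ ((k:ℕ)+1))^4 else 0) := by
    unfold eF
    refine Finset.sum_congr rfl fun k _ => ?_
    rw [Finset.sum_eq_single k]
    · rw [hentry k k]
      by_cases h : (k:ℕ) < r
      · rw [if_pos ⟨rfl, h⟩, if_pos h]
        rw [Complex.norm_real, Real.norm_eq_abs, sq_abs]
        ring
      · rw [if_neg (by tauto), if_neg h, norm_zero]
        norm_num
    · intro j _ hj
      rw [hentry k j, if_neg (by
        rintro ⟨h1, -⟩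
        exact hj (by ext; exact h1.symm)), norm_zero]
      norm_num
    · simp
  rw [step, Fin.sum_univ_eq_sum_range (fun k => if k < r then (σ (k+1))^4 else 0) n]
  exact range_ite_sum n r hrn (fun j => (σ j)^4)

lemma row_sum_one {n : ℕ} (W : Matrix (Fin n) (Fin n) ℂ) (h : W * Wᴴ = 1) (i : Fin n) :
    ∑ j : Fin n, ‖W i j‖^2 = 1 := by
  have h2 := congrArg (fun M : Matrix (Fin n) (Fin n) ℂ => (M i i).re) h
  simp only [Matrix.mul_apply, Matrix.conjTranspose_apply, Matrix.one_apply_eq] at h2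
  rw [show (1 : ℂ).re = 1 from rfl] at h2
  rw [← h2, Complex.re_sum]
  refine Finset.sum_congr rfl fun j _ => ?_
  rw [show star (W i j) = (starRingEnd ℂ) (W i j) from rfl, Complex.mul_conj,
    Complex.ofReal_re, Complex.normSq_eq_norm_sq]

lemma col_sum_one {n : ℕ} (W : Matrix (Fin n) (Fin n) ℂ) (h : Wᴴ * W = 1) (j : Fin n) :
    ∑ i : Fin n, ‖W i j‖^2 = 1 := by
  have h2 := congrArg (fun M : Matrix (Fin n) (Fin n) ℂ => (M j j).re) h
  simp only [Matrix.mul_apply, Matrix.conjTranspose_apply, Matrix.one_apply_eq] at h2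
  rw [show (1 : ℂ).re = 1 from rfl] at h2
  rw [← h2, Complex.re_sum]
  refine Finset.sum_congr rfl fun i _ => ?_
  rw [mul_comm, show star (W i j) = (starRingEnd ℂ) (W i j) from rfl, Complex.mul_conj,
    Complex.ofReal_re, Complex.normSq_eq_norm_sq]

lemma trunc_sum (N r s : ℕ) (hr : r ≤ N) (hs : s ≤ N) (g : ℕ → ℕ → ℝ)
    (h1 : ∀ i j, r ≤ i → g i j = 0) (h2 : ∀ i j, s ≤ j → g i j = 0) :
    ∑ i ∈ Finset.range N, ∑ j ∈ Finset.range N, g i j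
      = ∑ i ∈ Finset.range r, ∑ j ∈ Finset.range s, g i j := by
  rw [← Finset.sum_subset (Finset.range_subset_range.2 hr)
    (fun i _ hi => Finset.sum_eq_zero fun j _ => h1 i j (by
      simpa using hi))]
  refine Finset.sum_congr rfl fun i _ => ?_
  rw [← Finset.sum_subset (Finset.range_subset_range.2 hs)
    (fun j _ hj => h2 i j (by simpa using hj))]

lemma final_arith (t S P Q : ℝ) (ht0 : 0 ≤ t) (htS : t ≤ S) (hP : 0 ≤ P) (hQ : 0 ≤ Q) :
    Real.sqrt t ≤ Real.sqrt (S/(P+Q+2*S)) * Real.sqrt (P+Q+2*t) := by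
  have hS : 0 ≤ S := ht0.trans htS
  rw [← Real.sqrt_mul (by positivity)]
  apply Real.sqrt_le_sqrt
  rcases eq_or_lt_of_le (by positivity : (0:ℝ) ≤ P+Q+2*S) with h | h
  · have hS0 : S = 0 := by nlinarith
    have ht : t = 0 := le_antisymm (htS.trans hS0.le) ht0
    simp [ht]
    positivity
  · rw [div_mul_eq_mul_div, le_div_iff₀ h]
    nlinarith

end Aux

theorem stronger_AM_GM
    (m n r s : ℕ) (hm : 0 < m) (hn : 0 < n) (hrs : r ≤ s) (hsmn : s ≤ min m n)
    (A B : Matrix (Fin m) (Fin n) ℂ)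
    (σ σh : ℕ → ℝ) (hσ : SingVals r σ) (hσh : SingVals s σh)
    (hA : HasSVD A r σ) (hB : HasSVD B s σh)
    (hrankA : A.rank = r) (hrankB : B.rank = s) :
    frob (A * Bᴴ) ≤
      Real.sqrt ((∑ j ∈ Finset.Icc 1 r, σ j ^ 2 * σh j ^ 2) /
        (∑ j ∈ Finset.Icc 1 r, σ j ^ 4 + ∑ j ∈ Finset.Icc 1 s, σh j ^ 4 +
          2 * ∑ j ∈ Finset.Icc 1 r, σ j ^ 2 * σh j ^ 2)) *
      frob (Aᴴ * A + Bᴴ * B) := by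
  obtain ⟨U, V, hU1, hU2, hV1, hV2, hAe⟩ := hA
  obtain ⟨Uh, Vh, hUh1, hUh2, hVh1, hVh2, hBe⟩ := hB
  have hsn : s ≤ n := hsmn.trans (min_le_right m n)
  have hsm : s ≤ m := hsmn.trans (min_le_left m n)
  have hrn : r ≤ n := hrs.trans hsn
  have hrm : r ≤ m := hrs.trans hsm
  set D : Matrix (Fin m) (Fin n) ℂ := svdMat m n r σ with hD
  set Dh : Matrix (Fin m) (Fin n) ℂ := svdMat m n s σh with hDh
  set W : Matrix (Fin n) (Fin n) ℂ := Vᴴ * Vh with hWdef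
  have hWWH : W * Wᴴ = 1 := by
    rw [hWdef, Matrix.conjTranspose_mul, Matrix.conjTranspose_conjTranspose]
    rw [show Vᴴ * Vh * (Vhᴴ * V) = Vᴴ * ((Vh * Vhᴴ) * V) by
      rw [Matrix.mul_assoc, Matrix.mul_assoc], hVh2, Matrix.one_mul, hV1]
  have hWHW : Wᴴ * W = 1 := by
    rw [hWdef, Matrix.conjTranspose_mul, Matrix.conjTranspose_conjTranspose]
    rw [show Vhᴴ * V * (Vᴴ * Vh) = Vhᴴ * ((V * Vᴴ) * Vh) by
      rw [Matrix.mul_assoc, Matrix.mul_assoc], hV2, Matrix.one_mul, hVh1]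
  -- the three basic quantities
  set S : ℝ := ∑ j ∈ Finset.Icc 1 r, σ j ^ 2 * σh j ^ 2 with hSdef
  set P : ℝ := ∑ j ∈ Finset.Icc 1 r, σ j ^ 4 with hPdef
  set Q : ℝ := ∑ j ∈ Finset.Icc 1 s, σh j ^ 4 with hQdef
  set t : ℝ := eF (A * Bᴴ) with htdef
  -- reduction of A * Bᴴ
  have hABH : A * Bᴴ = U * ((D * (W * Dhᴴ)) * Uhᴴ) := by
    rw [hAe, hBe, hWdef]
    simp only [Matrix.conjTranspose_mul, Matrix.conjTranspose_conjTranspose, Matrix.mul_assoc]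
  have ht_eq : t = eF (D * (W * Dhᴴ)) := by
    rw [htdef, hABH, eF_unitary_left _ _ hU1, eF_unitary_right _ _ (by
      rw [Matrix.conjTranspose_conjTranspose]; exact hUh1)]
  -- ℕ-indexed data
  set a : ℕ → ℝ := fun i => if i < r then (σ (i+1))^2 else 0 with hadef
  set b : ℕ → ℝ := fun j => if j < s then (σh (j+1))^2 else 0 with hbdef
  set Wf : ℕ → ℕ → ℂ := fun i j => if h : i < n ∧ j < n then W ⟨i, h.1⟩ ⟨j, h.2⟩ else 0
    with hWfdef
  set w : ℕ → ℕ → ℝ := fun i j => ‖Wf i j‖^2 with hwdef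
  have ha_nonneg : ∀ i, 0 ≤ a i := by
    intro i; rw [hadef]; dsimp only; split <;> positivity
  have hb_nonneg : ∀ j, 0 ≤ b j := by
    intro j; rw [hbdef]; dsimp only; split <;> positivity
  have ha_anti : Antitone a := by
    intro i j hij
    rw [hadef]; dsimp only
    by_cases hj : j < r
    · rw [if_pos hj, if_pos (lt_of_le_of_lt hij hj)]
      have h1 : σ (j+1) ≤ σ (i+1) := sing_mono hσ (i+1) (j+1) (by omega) (by omega) (by omega)
      have h2 : 0 < σ (j+1) := hσ.1 (j+1) (by omega) (by omega)
      exact pow_le_pow_left₀ h2.le h1 2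
    · rw [if_neg hj]
      split <;> positivity
  have hb_anti : Antitone b := by
    intro i j hij
    rw [hbdef]; dsimp only
    by_cases hj : j < s
    · rw [if_pos hj, if_pos (lt_of_le_of_lt hij hj)]
      have h1 : σh (j+1) ≤ σh (i+1) := sing_mono hσh (i+1) (j+1) (by omega) (by omega) (by omega)
      have h2 : 0 < σh (j+1) := hσh.1 (j+1) (by omega) (by omega)
      exact pow_le_pow_left₀ h2.le h1 2
    · rw [if_neg hj]
      split <;> positivity
  -- entrywise description
  have hterm : ∀ i j : Fin m, ‖(D * (W * Dhᴴ)) i j‖^2 = a i * b j * w i j := by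
    intro i j
    rw [hD, svd_mul_apply hrn]
    by_cases hi : (i:ℕ) < r
    · rw [dif_pos hi, hDh, mul_svdH_apply hsn]
      by_cases hj : (j:ℕ) < s
      · rw [dif_pos hj]
        have hin : (i:ℕ) < n := hi.trans_le hrn
        have hjn : (j:ℕ) < n := hj.trans_le hsn
        have hwv : w i j = ‖W ⟨i, hin⟩ ⟨j, hjn⟩‖^2 := by
          rw [hwdef, hWfdef]; dsimp only; rw [dif_pos ⟨hin, hjn⟩]
        rw [hwv, hadef, hbdef]; dsimp only
        rw [if_pos hi, if_pos hj]
        rw [norm_mul, norm_mul, Complex.norm_real, Complex.norm_real,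
          Real.norm_eq_abs, Real.norm_eq_abs, mul_pow, mul_pow, sq_abs, sq_abs]
        ring
      · rw [dif_neg hj, hbdef]; dsimp only
        rw [if_neg hj]
        simp
    · rw [dif_neg hi, hadef]; dsimp only
      rw [if_neg hi]
      simp
  have ht_sum : t = ∑ i ∈ Finset.range n, ∑ j ∈ Finset.range n, a i * b j * w i j := by
    have h1 : t = ∑ i ∈ Finset.range m, ∑ j ∈ Finset.range m, a i * b j * w i j := by
      rw [ht_eq]
      unfold eF
      rw [show (∑ i : Fin m, ∑ j : Fin m, ‖(D * (W * Dhᴴ)) i j‖ ^ 2)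
          = ∑ i : Fin m, ∑ j : Fin m, a i * b j * w i j from
        Finset.sum_congr rfl fun i _ => Finset.sum_congr rfl fun j _ => hterm i j]
      rw [Fin.sum_univ_eq_sum_range (fun i => ∑ j : Fin m, a i * b j * w i j) m]
      exact Finset.sum_congr rfl fun i _ =>
        Fin.sum_univ_eq_sum_range (fun j => a i * b j * w i j) m
    have hza : ∀ i j, r ≤ i → a i * b j * w i j = 0 := by
      intro i j hir
      rw [hadef]; dsimp only; rw [if_neg (by omega)]; ring
    have hzb : ∀ i j, s ≤ j → a i * b j * w i j = 0 := by
      intro i j hjs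
      rw [hbdef]; dsimp only; rw [if_neg (by omega)]; ring
    rw [h1, trunc_sum m r s hrm hsm _ hza hzb, ← trunc_sum n r s hrn hsn _ hza hzb]
  -- apply the key inequality
  have htS : t ≤ S := by
    rw [ht_sum]
    have key := key_ineq n a b w ha_anti hb_anti
      (by rw [hadef]; dsimp only; rw [if_neg (by omega)])
      (by rw [hbdef]; dsimp only; rw [if_neg (by omega)])
      (fun i j => by rw [hwdef]; positivity)
      (fun i hi => by
        have : ∑ j ∈ Finset.range n, w i j = 1 := by
          rw [← Fin.sum_univ_eq_sum_range (fun j => w i j) n]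
          rw [show (∑ j : Fin n, w i (j:ℕ)) = ∑ j : Fin n, ‖W ⟨i, hi⟩ j‖^2 from
            Finset.sum_congr rfl fun j _ => by
              rw [hwdef, hWfdef]; dsimp only
              rw [dif_pos ⟨hi, j.isLt⟩]]
          exact row_sum_one W hWWH ⟨i, hi⟩
        exact this.le)
      (fun j hj => by
        have : ∑ i ∈ Finset.range n, w i j = 1 := by
          rw [← Fin.sum_univ_eq_sum_range (fun i => w i j) n]
          rw [show (∑ i : Fin n, w (i:ℕ) j) = ∑ i : Fin n, ‖W i ⟨j, hj⟩‖^2 from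
            Finset.sum_congr rfl fun i _ => by
              rw [hwdef, hWfdef]; dsimp only
              rw [dif_pos ⟨i.isLt, hj⟩]]
          exact col_sum_one W hWHW ⟨j, hj⟩
        exact this.le)
    refine key.trans (le_of_eq ?_)
    rw [hSdef, ← range_ite_sum n r hrn (fun j => σ j ^ 2 * σh j ^ 2)]
    refine Finset.sum_congr rfl fun j _ => ?_
    rw [hadef, hbdef]; dsimp only
    by_cases hjr : j < r
    · rw [if_pos hjr, if_pos (lt_of_lt_of_le hjr hrs), if_pos hjr]
    · rw [if_neg hjr, if_neg hjr, zero_mul]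
  -- Gram identities
  have hXeq : Aᴴ * A = V * ((Dᴴ * D) * Vᴴ) := by
    rw [hAe]
    rw [show (U * D * Vᴴ)ᴴ * (U * D * Vᴴ) = V * (Dᴴ * ((Uᴴ * U) * (D * Vᴴ))) by
      simp only [Matrix.conjTranspose_mul, Matrix.conjTranspose_conjTranspose,
        Matrix.mul_assoc], hU1, Matrix.one_mul, Matrix.mul_assoc]
  have hYeq : Bᴴ * B = Vh * ((Dhᴴ * Dh) * Vhᴴ) := by
    rw [hBe]
    rw [show (Uh * Dh * Vhᴴ)ᴴ * (Uh * Dh * Vhᴴ) = Vh * (Dhᴴ * ((Uhᴴ * Uh) * (Dh * Vhᴴ))) by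
      simp only [Matrix.conjTranspose_mul, Matrix.conjTranspose_conjTranspose,
        Matrix.mul_assoc], hUh1, Matrix.one_mul, Matrix.mul_assoc]
  have heFX : eF (Aᴴ * A) = P := by
    rw [hXeq, eF_unitary_left _ _ hV1, eF_unitary_right _ _ (by
      rw [Matrix.conjTranspose_conjTranspose]; exact hV1), hD, hPdef]
    exact eF_svd_gram m n r hrm hrn σ
  have heFY : eF (Bᴴ * B) = Q := by
    rw [hYeq, eF_unitary_left _ _ hVh1, eF_unitary_right _ _ (by
      rw [Matrix.conjTranspose_conjTranspose]; exact hVh1), hDh, hQdef]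
    exact eF_svd_gram m n s hsm hsn σh
  -- cross term
  have hcross : (Matrix.trace ((Aᴴ * A) * (Bᴴ * B))).re = t := by
    rw [htdef, eF_eq_trace]
    congr 1
    calc Matrix.trace ((Aᴴ * A) * (Bᴴ * B))
        = Matrix.trace ((Aᴴ * A * Bᴴ) * B) := by
          rw [Matrix.mul_assoc (Aᴴ * A) Bᴴ B]
      _ = Matrix.trace (B * (Aᴴ * A * Bᴴ)) := Matrix.trace_mul_comm _ _
      _ = Matrix.trace ((A * Bᴴ)ᴴ * (A * Bᴴ)) := by
          rw [show (A * Bᴴ)ᴴ * (A * Bᴴ) = B * (Aᴴ * A * Bᴴ) by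
            simp only [Matrix.conjTranspose_mul, Matrix.conjTranspose_conjTranspose,
              Matrix.mul_assoc]]
  -- expansion of the sum
  have hXherm : (Aᴴ * A)ᴴ = Aᴴ * A := by
    rw [Matrix.conjTranspose_mul, Matrix.conjTranspose_conjTranspose]
  have hYherm : (Bᴴ * B)ᴴ = Bᴴ * B := by
    rw [Matrix.conjTranspose_mul, Matrix.conjTranspose_conjTranspose]
  have hEsum : eF (Aᴴ * A + Bᴴ * B) = P + Q + 2 * t := by
    rw [eF_eq_trace, Matrix.conjTranspose_add, hXherm, hYherm]
    rw [Matrix.add_mul, Matrix.mul_add, Matrix.mul_add]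
    rw [Matrix.trace_add, Matrix.trace_add, Matrix.trace_add]
    rw [Complex.add_re, Complex.add_re, Complex.add_re]
    have e1 : (Matrix.trace ((Aᴴ*A) * (Aᴴ*A))).re = P := by
      rw [← heFX, eF_eq_trace, hXherm]
    have e2 : (Matrix.trace ((Bᴴ*B) * (Bᴴ*B))).re = Q := by
      rw [← heFY, eF_eq_trace, hYherm]
    have e3 : (Matrix.trace ((Bᴴ*B) * (Aᴴ*A))).re = t := by
      rw [Matrix.trace_mul_comm]; exact hcross
    rw [e1, e2, e3, hcross]
    ring
  -- finish
  have hgoal1 : frob (A * Bᴴ) = Real.sqrt t := by rw [frob_eq_eF, htdef]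
  have hgoal2 : frob (Aᴴ * A + Bᴴ * B) = Real.sqrt (P + Q + 2 * t) := by
    rw [frob_eq_eF, hEsum]
  rw [hgoal1, hgoal2]
  have hP0 : 0 ≤ P := by
    rw [hPdef]
    exact Finset.sum_nonneg fun j _ => by positivity
  have hQ0 : 0 ≤ Q := by
    rw [hQdef]
    exact Finset.sum_nonneg fun j _ => by positivity
  exact final_arith t S P Q (by rw [htdef]; exact eF_nonneg _) htS hP0 hQ0
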